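/- Let M_1 = (V, I_1), …, M_k = (V, I_k) be k matroids over a common finite ground set V, and suppose a partition (S'_1, …, S'_k) of S' with S'_i ∈ I_i is obtained from a partition (S_1, …, S_k) of S (with S_i ∈ I_i) by augmenting along a shortest (s, T)-path in the compressed exchange graph G(S_1, …, S_k) (so |S'| > |S|). Let d denote distance in G(S_1, …, S_k) and d' denote distance in G(S'_1, …, S'_k). Then for all v ∈ V: (i) if d(s, v) < d(s, T) then d'(s, v) ≥ d(s, v), and if d(v, T) < d(s, T) then d'(v, T) ≥ d(v, T); (ii) if d(s, v) ≥ d(s, T) then d'(s, v) ≥ d(s, T), and if d(v, T) ≥ d(s, T) then d'(v, T) ≥ d(s, T). -/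

import Mathlib

/-- A matroid on a finite ground set `V`, given by its family of independent sets. -/
structure FinMatroid (V : Type*) [DecidableEq V] [Fintype V] where
  Indep : Finset V → Prop
  indep_empty : Indep ∅
  indep_subset : ∀ ⦃S T : Finset V⦄, Indep S → T ⊆ S → Indep T
  indep_aug : ∀ ⦃S T : Finset V⦄, Indep S → Indep T → T.card < S.card →
    ∃ x ∈ S \ T, Indep (insert x T)

/-- `S` is partitionable w.r.t. the matroids `M i`: it can be partitioned into
sets `P i` with `P i` independent in `M i`. -/
def Partitionable {V ι : Type*} [DecidableEq V] [Fintype V] [DecidableEq ι] [Fintype ι]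
    (M : ι → FinMatroid V) (S : Finset V) : Prop :=
  ∃ P : ι → Finset V, (∀ i, (M i).Indep (P i)) ∧
    (∀ i j, i ≠ j → Disjoint (P i) (P j)) ∧ Finset.univ.biUnion P = S

/-- `reachIn Adj n x y` : there is a directed walk with exactly `n` edges from `x` to `y`. -/
def reachIn {α : Type*} (Adj : α → α → Prop) : ℕ → α → α → Prop
  | 0, x, y => x = y
  | n + 1, x, y => ∃ z, Adj x z ∧ reachIn Adj n z y

/-- Distance (number of edges of a shortest directed path) from `x` to `y`; `⊤` if none. -/
noncomputable def ddist {α : Type*} (Adj : α → α → Prop) (x y : α) : ℕ∞ :=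
  sInf {n : ℕ∞ | ∃ m : ℕ, n = (m : ℕ∞) ∧ reachIn Adj m x y}

/-- Vertices of the compressed exchange graph: ground elements, a source `src`,
and one sink `snk i` for each index `i`. -/
inductive CVert (V ι : Type*) where
  | elt : V → CVert V ι
  | src : CVert V ι
  | snk : ι → CVert V ι

/-- The compressed exchange graph `G(S₁, …, S_k)` relative to the partition `P`. -/
def compAdj {V ι : Type*} [DecidableEq V] [Fintype V] [DecidableEq ι] [Fintype ι]
    (M : ι → FinMatroid V) (P : ι → Finset V) : CVert V ι → CVert V ι → Prop
  | CVert.elt v, CVert.elt u =>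
      ∃ i, u ∈ P i ∧ ¬ (M i).Indep (insert v (P i)) ∧
        (M i).Indep (insert v ((P i).erase u))
  | CVert.src, CVert.elt v => v ∉ Finset.univ.biUnion P
  | CVert.elt v, CVert.snk i => v ∉ P i ∧ (M i).Indep (insert v (P i))
  | _, _ => False

/-- The result of the procedure `Update`: augmenting the partition `P` along the path
`s, v₁, …, v_{l−1}, t_j`. -/
def updatePartition {V ι : Type*} [DecidableEq V] [DecidableEq ι]
    (P : ι → Finset V) (π : V → ι) (vs : List V) (hne : vs ≠ []) (j : ι) :
    ι → Finset V := fun i =>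
  ((P i) \ (vs.tail.filter (fun v => π v = i)).toFinset)
    ∪ (((vs.zip vs.tail).filter (fun p => π p.2 = i)).map Prod.fst).toFinset
    ∪ (if i = j then {vs.getLast hne} else ∅)

section Reach

variable {α : Type*} {Adj : α → α → Prop} {x y z : α}


theorem reachIn_trans {m n : ℕ} (h1 : reachIn Adj m x y) (h2 : reachIn Adj n y z) :
    reachIn Adj (m + n) x z := by
  induction m generalizing x with
  | zero => rw [show (0 : ℕ) + n = n by omega]; cases h1; exact h2
  | succ m ih =>
      obtain ⟨u, hxu, hu⟩ := h1
      rw [show m + 1 + n = (m + n) + 1 by omega]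
      exact ⟨u, hxu, ih hu⟩

theorem reachIn_succ_iff_last {n : ℕ} {x y : α} :
    reachIn Adj (n + 1) x y ↔ ∃ w, reachIn Adj n x w ∧ Adj w y := by
  induction n generalizing x with
  | zero =>
      constructor
      · rintro ⟨w, hw, hwy⟩
        have h : w = y := hwy
        subst h
        exact ⟨x, rfl, hw⟩
      · rintro ⟨w, hw, hwy⟩
        have h : x = w := hw
        subst h
        exact ⟨y, hwy, rfl⟩
  | succ n ih =>
      constructor
      · rintro ⟨u, hxu, hu⟩
        obtain ⟨z, hz, hzy⟩ := ih.1 hu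
        exact ⟨z, ⟨u, hxu, hz⟩, hzy⟩
      · rintro ⟨z, ⟨u, hxu, hu⟩, hzy⟩
        exact ⟨u, hxu, ih.2 ⟨z, hu, hzy⟩⟩

theorem reachIn_one {x y : α} (h : Adj x y) : reachIn Adj 1 x y := ⟨y, h, rfl⟩

theorem ddist_le_of_reachIn {m : ℕ} (h : reachIn Adj m x y) : ddist Adj x y ≤ m :=
  sInf_le ⟨m, rfl, h⟩

theorem le_ddist {c : ℕ∞} (h : ∀ m : ℕ, reachIn Adj m x y → c ≤ m) : c ≤ ddist Adj x y :=
  le_sInf (by rintro n ⟨m, rfl, hm⟩; exact h m hm)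

theorem exists_reachIn_of_ddist_le {n : ℕ} (h : ddist Adj x y ≤ n) :
    ∃ m ≤ n, reachIn Adj m x y := by
  by_contra hc
  push_neg at hc
  have h2 : ((n : ℕ∞) + 1) ≤ ddist Adj x y := le_ddist fun m hm => by
    have hnm : ¬ (m ≤ n) := fun hle => hc m hle hm
    have : n + 1 ≤ m := by omega
    exact_mod_cast this
  have := le_trans h2 h
  have : (n : ℕ) + 1 ≤ n := by exact_mod_cast this
  omega

end Reach

namespace FinMatroid

open Finset

variable {V : Type*} [DecidableEq V] [Fintype V] (M : FinMatroid V)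

theorem dep_mono {A B : Finset V} (h : ¬ M.Indep A) (hAB : A ⊆ B) : ¬ M.Indep B :=
  fun hB => h (M.indep_subset hB hAB)

/-- `x` is in the span of `A`. -/
def Spans (A : Finset V) (x : V) : Prop := x ∈ A ∨ ¬ M.Indep (insert x A)

theorem spans_mono {A B : Finset V} {x : V} (hAB : A ⊆ B) (h : M.Spans A x) : M.Spans B x := by
  rcases h with h | h
  · exact Or.inl (hAB h)
  · exact Or.inr (M.dep_mono h (insert_subset_insert _ hAB))

theorem not_spans {A : Finset V} {x : V} (h : ¬ M.Spans A x) :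
    x ∉ A ∧ M.Indep (insert x A) := by
  rw [Spans] at h; push_neg at h; exact h

theorem exists_maximal_indep_between {B Z : Finset V} (hB : M.Indep B) (hBZ : B ⊆ Z) :
    ∃ I, B ⊆ I ∧ I ⊆ Z ∧ M.Indep I ∧ ∀ x ∈ Z, x ∉ I → ¬ M.Indep (insert x I) := by
  by_cases h : ∀ x ∈ Z, x ∉ B → ¬ M.Indep (insert x B)
  · exact ⟨B, Subset.rfl, hBZ, hB, h⟩
  · push_neg at h
    obtain ⟨x, hxZ, hxB, hx⟩ := h
    have hxB' : B ⊆ insert x B := subset_insert _ _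
    have hcard : Z.card - (insert x B).card < Z.card - B.card := by
      have h1 : B.card < (insert x B).card := card_lt_card (ssubset_insert hxB)
      have h2 : (insert x B).card ≤ Z.card := card_le_card (insert_subset hxZ hBZ)
      omega
    obtain ⟨I, h1, h2, h3, h4⟩ := exists_maximal_indep_between hx (insert_subset hxZ hBZ)
    exact ⟨I, hxB'.trans h1, h2, h3, h4⟩
termination_by Z.card - B.card

theorem card_le_of_spans {A I : Finset V} (hA : M.Indep A) (hI : M.Indep I)
    (h : ∀ y ∈ I, M.Spans A y) : I.card ≤ A.card := by
  by_contra hc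
  push_neg at hc
  obtain ⟨z, hz, hzi⟩ := M.indep_aug hI hA hc
  rw [mem_sdiff] at hz
  rcases h z hz.1 with h' | h'
  · exact hz.2 h'
  · exact h' hzi

theorem card_le_of_maximal {A Z I : Finset V} (hA : M.Indep A) (hAZ : A ⊆ Z)
    (hI : M.Indep I) (hmax : ∀ x ∈ Z, x ∉ I → ¬ M.Indep (insert x I)) :
    A.card ≤ I.card := by
  by_contra hc
  push_neg at hc
  obtain ⟨w, hw, hwi⟩ := M.indep_aug hA hI hc
  rw [mem_sdiff] at hw
  exact hmax w (hAZ hw.1) hw.2 hwi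

theorem spans_trans {A B : Finset V} (hA : M.Indep A) (hB : M.Indep B)
    (h : ∀ b ∈ B, M.Spans A b) {x : V} (hx : M.Spans B x) : M.Spans A x := by
  by_contra hc
  obtain ⟨hxA, hxAind⟩ := M.not_spans hc
  have hxB : x ∉ B := fun hxB => hc (h x hxB)
  obtain ⟨I, hBI, hIZ, hIind, hImax⟩ :=
    M.exists_maximal_indep_between hB (subset_union_right (s₁ := A))
  have hIsp : ∀ y ∈ I, M.Spans A y := fun y hy => by
    rcases mem_union.1 (hIZ hy) with h' | h'
    · exact Or.inl h'
    · exact h y h'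
  have hIcard : I.card ≤ A.card := M.card_le_of_spans hA hIind hIsp
  have hxI : x ∉ I := fun hxI => hc (hIsp x hxI)
  by_cases hind : M.Indep (insert x I)
  · have : M.Indep (insert x B) := M.indep_subset hind (insert_subset_insert _ hBI)
    rcases hx with h' | h'
    · exact hxB h'
    · exact h' this
  · have hImax' : ∀ y ∈ insert x (A ∪ B), y ∉ I → ¬ M.Indep (insert y I) := by
      intro y hy hyI
      rcases mem_insert.1 hy with rfl | hy'
      · exact hind
      · exact hImax y hy' hyI
    have h1 : (insert x A).card ≤ I.card :=
      M.card_le_of_maximal hxAind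
        (insert_subset_insert _ (subset_union_left)) hIind hImax'
    have h2 : (insert x A).card = A.card + 1 := card_insert_of_notMem hxA
    omega

theorem spans_exchange {S : Finset V} {x y : V} (hS : M.Indep S) (hy : y ∈ S)
    (hdep : ¬ M.Indep (insert x S)) (hexch : M.Indep (insert x (S.erase y))) :
    ∀ z, M.Spans (insert x (S.erase y)) z ↔ M.Spans S z := by
  have hxS : x ∉ S := fun h => hdep (by rwa [insert_eq_self.2 h])
  have hBsp : ∀ b ∈ insert x (S.erase y), M.Spans S b := by
    intro b hb
    rcases mem_insert.1 hb with rfl | hb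
    · exact Or.inr hdep
    · exact Or.inl (mem_of_mem_erase hb)
  have hSsp : ∀ s ∈ S, M.Spans (insert x (S.erase y)) s := by
    intro s hs
    by_cases hsy : s = y
    · subst hsy
      refine Or.inr fun hind => hdep ?_
      have he : insert s (insert x (S.erase s)) = insert x S := by
        rw [Finset.insert_comm, insert_erase hs]
      rwa [he] at hind
    · exact Or.inl (mem_insert_of_mem (mem_erase.2 ⟨hsy, hs⟩))
  intro z
  constructor
  · exact fun h => M.spans_trans hS hexch hBsp h
  · exact fun h => M.spans_trans hexch hS hSsp h

theorem exists_minimal_dep {Z : Finset V} (hZ : ¬ M.Indep Z) :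
    ∃ C, C ⊆ Z ∧ ¬ M.Indep C ∧ ∀ x ∈ C, M.Indep (C.erase x) := by
  by_cases h : ∀ x ∈ Z, M.Indep (Z.erase x)
  · exact ⟨Z, Subset.rfl, hZ, h⟩
  · push_neg at h
    obtain ⟨x, hx, hdep⟩ := h
    have : (Z.erase x).card < Z.card := card_erase_lt_of_mem hx
    obtain ⟨C, h1, h2, h3⟩ := exists_minimal_dep hdep
    exact ⟨C, h1.trans (erase_subset _ _), h2, h3⟩
termination_by Z.card

theorem mem_of_minimal_dep {C : Finset V} {t : V} (hCdep : ¬ M.Indep C)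
    (hx : t ∈ C) : M.Spans (C.erase t) t :=
  Or.inr (by rwa [insert_erase hx])

theorem exch_char {S C : Finset V} {t : V} (hS : M.Indep S) (htS : t ∉ S)
    (hCsub : C ⊆ insert t S) (hCdep : ¬ M.Indep C) (hCmin : ∀ x ∈ C, M.Indep (C.erase x))
    {z : V} (hz : z ∈ S) : M.Indep (insert t (S.erase z)) ↔ z ∈ C := by
  constructor
  · intro hind
    by_contra hzC
    refine (M.dep_mono hCdep fun c hc => ?_) hind
    rcases mem_insert.1 (hCsub hc) with rfl | hcS
    · exact mem_insert_self _ _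
    · exact mem_insert_of_mem (mem_erase.2 ⟨fun h => hzC (h ▸ hc), hcS⟩)
  · intro hzC
    have hzt : z ≠ t := fun h => htS (h ▸ hz)
    have hCz : M.Indep (C.erase z) := hCmin z hzC
    have hsub : C.erase z ⊆ insert t (S.erase z) := by
      intro c hc
      obtain ⟨hcz, hcC⟩ := mem_erase.1 hc
      rcases mem_insert.1 (hCsub hcC) with rfl | h
      · exact mem_insert_self _ _
      · exact mem_insert_of_mem (mem_erase.2 ⟨hcz, h⟩)
    obtain ⟨I, hCI, hIA, hIind, hImax⟩ := M.exists_maximal_indep_between hCz hsub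
    by_contra hAdep
    have hScard : 1 ≤ S.card := card_pos.2 ⟨z, hz⟩
    have hAcard : (insert t (S.erase z)).card = S.card := by
      rw [card_insert_of_notMem (fun h => htS (mem_of_mem_erase h)), card_erase_of_mem hz]
      omega
    by_cases hIeq : I.card = S.card
    · have : I = insert t (S.erase z) := eq_of_subset_of_card_le hIA (by omega)
      exact hAdep (this ▸ hIind)
    · have hIlt : I.card < S.card := by
        have := card_le_card hIA
        omega
      obtain ⟨e, he, hei⟩ := M.indep_aug hS hIind hIlt
      rw [mem_sdiff] at he
      by_cases hez : e = z
      · subst hez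
        refine hCdep (M.indep_subset hei fun c hc => ?_)
        by_cases hce : c = e
        · exact hce ▸ mem_insert_self _ _
        · exact mem_insert_of_mem (hCI (mem_erase.2 ⟨hce, hc⟩))
      · exact hImax e (mem_insert_of_mem (mem_erase.2 ⟨hez, he.1⟩)) he.2 hei

end FinMatroid

/-- Chains of activated pair-positions. -/
inductive ActChain (pair : ℕ → Prop) (edge : ℕ → ℕ → Prop) (seed : ℕ → Prop) : ℕ → Prop
  | base (a : ℕ) : pair a → seed a → ActChain pair edge seed a
  | step (a b : ℕ) : pair a → ActChain pair edge seed b → edge b a → ActChain pair edge seed a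

theorem ActChain.pair_of {pair : ℕ → Prop} {edge : ℕ → ℕ → Prop} {seed : ℕ → Prop} {a : ℕ}
    (h : ActChain pair edge seed a) : pair a := by
  cases h with
  | base _ h _ => exact h
  | step _ _ h _ _ => exact h

section PredDefs
variable {V ι : Type*} [DecidableEq V] [Fintype V]

def pairPred (π : V → ι) (w : ℕ → V) (n : ℕ) (i : ι) (a : ℕ) : Prop :=
  1 ≤ a ∧ a < n ∧ π (w a) = i

def edgePred (Mi : FinMatroid V) (Pi : Finset V) (w : ℕ → V) (b a : ℕ) : Prop :=
  Mi.Indep (insert (w (b-1)) (Pi.erase (w a)))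

def seedPred (Mi : FinMatroid V) (Pi : Finset V) (w : ℕ → V) (u : V) (a : ℕ) : Prop :=
  (u ∉ Pi ∧ ¬ Mi.Indep (insert u Pi) ∧ Mi.Indep (insert u (Pi.erase (w a)))) ∨ u = w a

end PredDefs
open Finset
set_option linter.unusedSectionVars false

section Mono

variable {V ι : Type*} [DecidableEq V] [Fintype V] [DecidableEq ι] [Fintype ι]

/-- Vertices of the compressed exchange graph (local copy for scratch). -/
-- (in final file CVert/compAdj/updatePartition already exist)

def swapSeq (P : ι → Finset V) (π : V → ι) (w : ℕ → V) (n : ℕ) : ℕ → ι → Finset V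
  | 0 => P
  | (k+1) => fun i =>
      if π (w (n - 1 - k)) = i then
        insert (w (n - 2 - k)) ((swapSeq P π w n k i).erase (w (n - 1 - k)))
      else swapSeq P π w n k i

def pw (vs : List V) (hne : vs ≠ []) : ℕ → V := fun a => vs.getD a (vs.getLast hne)

def gvert (j : ι) (vs : List V) (hne : vs ≠ []) : ℕ → CVert V ι := fun idx =>
  if idx = 0 then CVert.src
  else if idx ≤ vs.length then CVert.elt (pw vs hne (idx - 1))
  else CVert.snk j

def procSet (π : V → ι) (w : ℕ → V) (n k : ℕ) (i : ι) : Finset ℕ :=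
  (Finset.range n).filter (fun a => n - k ≤ a ∧ 1 ≤ a ∧ π (w a) = i)

variable (M : ι → FinMatroid V) (P : ι → Finset V) (S : Finset V)
  (hind : ∀ i, (M i).Indep (P i)) (hdisj : ∀ i j, i ≠ j → Disjoint (P i) (P j))
  (hS : Finset.univ.biUnion P = S)
  (π : V → ι) (hπ : ∀ i, ∀ v ∈ P i, π v = i)
  (j : ι) (vs : List V) (hne : vs ≠ []) (hnd : vs.Nodup)
  (hchain : List.Chain' (compAdj M P)
    (CVert.src :: (vs.map CVert.elt ++ [CVert.snk j])))
  (hshort : (⨅ i : ι, ddist (compAdj M P) CVert.src (CVert.snk i))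
    = ((vs.length + 1 : ℕ) : ℕ∞))

include hne in
lemma npos : 1 ≤ vs.length := List.length_pos_iff.2 hne

include hnd in
lemma pw_inj {a a' : ℕ} (ha : a < vs.length) (ha' : a' < vs.length)
    (h : pw vs hne a = pw vs hne a') : a = a' := by
  have e1 : pw vs hne a = vs.get ⟨a, ha⟩ := List.getD_eq_getElem _ _ ha
  have e2 : pw vs hne a' = vs.get ⟨a', ha'⟩ := List.getD_eq_getElem _ _ ha'
  rw [e1, e2] at h
  have := (List.Nodup.get_inj_iff hnd).1 h
  simpa using congrArg Fin.val this

include hchain in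
lemma chain_get : ∀ idx, idx ≤ vs.length →
    compAdj M P (gvert j vs hne idx) (gvert j vs hne (idx + 1)) := by
  intro idx hidx
  set FL : List (CVert V ι) := CVert.src :: (vs.map CVert.elt ++ [CVert.snk j]) with hFL
  have hlen : FL.length = vs.length + 2 := by simp [hFL]
  have hget : ∀ (id2 : ℕ) (h : id2 < FL.length), FL[id2] = gvert j vs hne id2 := by
    intro id2 h
    match id2 with
    | 0 => simp [hFL, gvert]
    | (k+1) =>
      have hk2 : k < (vs.map (CVert.elt : V → CVert V ι) ++ [CVert.snk j]).length := by
        simp; rw [hlen] at h; omega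
      have e0 : FL[k+1] = (vs.map CVert.elt ++ [CVert.snk j])[k] := by
        simp [hFL]
      rw [e0]
      by_cases hk : k < vs.length
      · have hk' : k < (vs.map (CVert.elt : V → CVert V ι)).length := by simpa using hk
        rw [List.getElem_append_left hk']
        simp only [List.getElem_map]
        have hvk : vs[k] = pw vs hne k := (List.getD_eq_getElem vs _ hk).symm
        rw [hvk]
        simp [gvert, Nat.succ_le_of_lt hk]
      · have hk' : (vs.map (CVert.elt : V → CVert V ι)).length ≤ k := by simpa using hk
        rw [List.getElem_append_right hk']
        have : ¬ (k + 1 ≤ vs.length) := by omega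
        simp [gvert, this]
  have := List.isChain_iff_getElem.1 hchain idx (by rw [hlen]; omega)
  rw [hget idx (by omega), hget (idx+1) (by omega)] at this
  exact this

include hchain in
lemma reach_seg : ∀ (d p : ℕ), p + d ≤ vs.length + 1 →
    reachIn (compAdj M P) d (gvert j vs hne p) (gvert j vs hne (p + d)) := by
  intro d
  induction d with
  | zero => intro p _; simp [reachIn]
  | succ d ih =>
      intro p h
      refine ⟨gvert j vs hne (p+1), chain_get (M:=M) (P:=P) (j:=j) (vs:=vs) (hne:=hne) (hchain:=hchain) p (by omega), ?_⟩
      have := ih (p+1) (by omega)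
      rwa [show p + 1 + d = p + (d+1) by omega] at this

include hchain in
lemma reach_src_pw {a : ℕ} (ha : a < vs.length) :
    reachIn (compAdj M P) (a+1) CVert.src (CVert.elt (pw vs hne a)) := by
  have := reach_seg (M:=M) (P:=P) (j:=j) (vs:=vs) (hne:=hne) (hchain:=hchain) (a+1) 0 (by omega)
  simp only [Nat.zero_add] at this
  have e0 : gvert j vs hne 0 = CVert.src := by simp [gvert]
  have e1 : gvert j vs hne (a+1) = CVert.elt (pw vs hne a) := by
    simp [gvert, Nat.succ_le_of_lt ha]
  rwa [e0, e1] at this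

include hchain in
lemma reach_pw_snk {a : ℕ} (ha : a < vs.length) :
    reachIn (compAdj M P) (vs.length - a) (CVert.elt (pw vs hne a)) (CVert.snk j) := by
  have := reach_seg (M:=M) (P:=P) (j:=j) (vs:=vs) (hne:=hne) (hchain:=hchain) (vs.length - a) (a+1) (by omega)
  have e1 : gvert j vs hne (a+1) = CVert.elt (pw vs hne a) := by
    simp [gvert, Nat.succ_le_of_lt ha]
  have e2 : a + 1 + (vs.length - a) = vs.length + 1 := by omega
  have e3 : gvert j vs hne (vs.length + 1) = CVert.snk j := by
    have : ¬ (vs.length + 1 ≤ vs.length) := by omega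
    simp [gvert, this]
  rw [e2, e1, e3] at this
  exact this

include hshort in
lemma snk_lb {i' : ι} {m : ℕ} (h : reachIn (compAdj M P) m CVert.src (CVert.snk i')) :
    vs.length + 1 ≤ m := by
  have h1 : ddist (compAdj M P) CVert.src (CVert.snk i') ≤ m := ddist_le_of_reachIn h
  have h2 : ((vs.length + 1 : ℕ) : ℕ∞) ≤ ddist (compAdj M P) CVert.src (CVert.snk i') :=
    hshort ▸ iInf_le _ i'
  exact_mod_cast le_trans h2 h1

include hchain hshort in
lemma src_lb {a : ℕ} (ha : a < vs.length) {m : ℕ}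
    (h : reachIn (compAdj M P) m CVert.src (CVert.elt (pw vs hne a))) : a + 1 ≤ m := by
  have := reachIn_trans h (reach_pw_snk (M:=M) (P:=P) (j:=j) (vs:=vs) (hne:=hne) (hchain:=hchain) ha)
  have := snk_lb (M:=M) (P:=P) (vs:=vs) (hshort:=hshort) this
  omega

include hchain hshort in
lemma snk_lb2 {a : ℕ} (ha : a < vs.length) {i' : ι} {m : ℕ}
    (h : reachIn (compAdj M P) m (CVert.elt (pw vs hne a)) (CVert.snk i')) :
    vs.length - a ≤ m := by
  have := reachIn_trans (reach_src_pw (M:=M) (P:=P) (j:=j) (vs:=vs) (hne:=hne) (hchain:=hchain) ha) h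
  have := snk_lb (M:=M) (P:=P) (vs:=vs) (hshort:=hshort) this
  omega

include hchain hπ in
lemma pair_mem {a : ℕ} (h1 : 1 ≤ a) (h2 : a < vs.length) :
    pw vs hne a ∈ P (π (pw vs hne a)) ∧
    ¬ (M (π (pw vs hne a))).Indep (insert (pw vs hne (a-1)) (P (π (pw vs hne a)))) ∧
    (M (π (pw vs hne a))).Indep
      (insert (pw vs hne (a-1)) ((P (π (pw vs hne a))).erase (pw vs hne a))) := by
  have hadj := chain_get (M:=M) (P:=P) (j:=j) (vs:=vs) (hne:=hne) (hchain:=hchain) a (le_of_lt h2)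
  have e1 : gvert j vs hne a = CVert.elt (pw vs hne (a-1)) := by
    have : a ≠ 0 := by omega
    simp [gvert, this, le_of_lt h2]
  have e2 : gvert j vs hne (a+1) = CVert.elt (pw vs hne a) := by
    simp [gvert, Nat.succ_le_of_lt h2]
  rw [e1, e2] at hadj
  obtain ⟨i, hmem, hdep, hex⟩ := hadj
  have hpi : π (pw vs hne a) = i := hπ i _ hmem
  rw [hpi]
  exact ⟨hmem, hdep, hex⟩

include hchain hπ hind in
lemma pair_t_not_mem {a : ℕ} (h1 : 1 ≤ a) (h2 : a < vs.length) :
    pw vs hne (a-1) ∉ P (π (pw vs hne a)) := by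
  intro hmem
  have h := (pair_mem (M:=M) (P:=P) (π:=π) (hπ:=hπ) (j:=j) (vs:=vs) (hne:=hne) (hchain:=hchain) h1 h2).2.1
  rw [insert_eq_self.2 hmem] at h
  exact h (hind _)

include hchain in
lemma last_snk : pw vs hne (vs.length - 1) ∉ P j ∧
    (M j).Indep (insert (pw vs hne (vs.length - 1)) (P j)) := by
  have hn := npos (vs := vs) hne
  have hadj := chain_get (M:=M) (P:=P) (j:=j) (vs:=vs) (hne:=hne) (hchain:=hchain) vs.length le_rfl
  have e1 : gvert j vs hne vs.length = CVert.elt (pw vs hne (vs.length - 1)) := by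
    have : vs.length ≠ 0 := by omega
    simp [gvert, this]
  have e2 : gvert j vs hne (vs.length + 1) = CVert.snk j := by
    have : ¬ (vs.length + 1 ≤ vs.length) := by omega
    simp [gvert, this]
  rw [e1, e2] at hadj
  exact hadj

include hchain in
lemma src_fact : pw vs hne 0 ∉ Finset.univ.biUnion P := by
  have hn := npos (vs := vs) hne
  have hadj := chain_get (M:=M) (P:=P) (j:=j) (vs:=vs) (hne:=hne) (hchain:=hchain) 0 (by omega)
  have e1 : gvert j vs hne 0 = CVert.src := by simp [gvert]
  have e2 : gvert j vs hne 1 = CVert.elt (pw vs hne 0) := by simp [gvert, hn]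
  rw [e1, e2] at hadj
  exact hadj



include hne hnd hind hπ hchain hshort in
lemma swap_inv : ∀ k, k ≤ vs.length - 1 →
    (∀ i, (M i).Indep (swapSeq P π (pw vs hne) vs.length k i)) ∧
    (∀ i x, (M i).Spans (swapSeq P π (pw vs hne) vs.length k i) x ↔ (M i).Spans (P i) x) ∧
    (∀ i, swapSeq P π (pw vs hne) vs.length k i =
      (P i \ (procSet π (pw vs hne) vs.length k i).image (pw vs hne))
        ∪ (procSet π (pw vs hne) vs.length k i).image (fun a => pw vs hne (a-1))) := by
  intro k
  induction k with
  | zero =>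
      intro _
      have hproc : ∀ i, procSet π (pw vs hne) vs.length 0 i = ∅ := by
        intro i
        ext a
        simp only [procSet, mem_filter, mem_range, notMem_empty, iff_false, not_and]
        intro h1 h2
        omega
      exact ⟨fun i => hind i, fun i x => Iff.rfl, fun i => by rw [hproc]; simp [swapSeq]⟩
  | succ k IH =>
      intro hk1
      have hn1 : 1 ≤ vs.length := npos (vs := vs) (hne := hne)
      obtain ⟨IH1, IH2, IH3⟩ := IH (by omega)
      set w : ℕ → V := pw vs hne with hwdef
      set n := vs.length with hndef
      obtain ⟨a₀, ha₀def⟩ : ∃ a, a = n - 1 - k := ⟨_, rfl⟩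
      have ha₀1 : 1 ≤ a₀ := by omega
      have ha₀n : a₀ < n := by omega
      have hidx : n - 2 - k = a₀ - 1 := by omega
      obtain ⟨hs_mem, hdep, hex⟩ :=
        pair_mem (M:=M) (P:=P) (π:=π) (hπ:=hπ) (j:=j) (vs:=vs) (hne:=hne) (hchain:=hchain)
          ha₀1 ha₀n
      have htP : w (a₀-1) ∉ P (π (w a₀)) :=
        pair_t_not_mem (M:=M) (P:=P) (π:=π) (hπ:=hπ) (j:=j) (vs:=vs) (hne:=hne)
          (hind:=hind) (hchain:=hchain) ha₀1 ha₀n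
      obtain ⟨C, hCsub, hCdep, hCmin⟩ := (M (π (w a₀))).exists_minimal_dep hdep
      have hsC : w a₀ ∈ C :=
        ((M (π (w a₀))).exch_char (hind _) htP hCsub hCdep hCmin hs_mem).1 hex
      have hstair : ∀ a', a₀ < a' → a' < n → π (w a') = π (w a₀) → w a' ∉ C := by
        intro a' hlt hln hpi hmemC
        have hsm' := (pair_mem (M:=M) (P:=P) (π:=π) (hπ:=hπ) (j:=j) (vs:=vs) (hne:=hne)
          (hchain:=hchain) (a:=a') (by omega) hln).1
        rw [hpi] at hsm'
        have hexch' : (M (π (w a₀))).Indep (insert (w (a₀-1)) ((P (π (w a₀))).erase (w a'))) :=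
          ((M (π (w a₀))).exch_char (hind _) htP hCsub hCdep hCmin hsm').2 hmemC
        have hedge : compAdj M P (CVert.elt (w (a₀-1))) (CVert.elt (w a')) :=
          ⟨π (w a₀), hsm', hdep, hexch'⟩
        have hr1 : reachIn (compAdj M P) (a₀-1+1) CVert.src (CVert.elt (w (a₀-1))) :=
          reach_src_pw (M:=M) (P:=P) (j:=j) (vs:=vs) (hne:=hne) (hchain:=hchain) (by omega)
        have hr2 : reachIn (compAdj M P) ((a₀-1+1)+1) CVert.src (CVert.elt (w a')) :=
          reachIn_trans hr1 ⟨_, hedge, rfl⟩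
        have := src_lb (M:=M) (P:=P) (j:=j) (vs:=vs) (hne:=hne) (hchain:=hchain)
          (hshort:=hshort) hln hr2
        omega
      have hs_in_swap : w a₀ ∈ swapSeq P π w n k (π (w a₀)) := by
        rw [IH3]
        refine mem_union_left _ (mem_sdiff.2 ⟨hs_mem, ?_⟩)
        intro hmem
        obtain ⟨a', ha', heq⟩ := mem_image.1 hmem
        simp only [procSet, mem_filter, mem_range] at ha'
        have := pw_inj (vs:=vs) (hne:=hne) (hnd:=hnd) ha'.1 ha₀n heq
        omega
      have ht_notin_swap : w (a₀-1) ∉ swapSeq P π w n k (π (w a₀)) := by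
        rw [IH3]
        intro hmem
        rcases mem_union.1 hmem with h | h
        · exact htP (mem_sdiff.1 h).1
        · obtain ⟨a', ha', heq⟩ := mem_image.1 h
          simp only [procSet, mem_filter, mem_range] at ha'
          have h1 : a' - 1 < n := by omega
          have := pw_inj (vs:=vs) (hne:=hne) (hnd:=hnd) h1 (by omega : a₀ - 1 < n) heq
          omega
      have ht_dep_swap : ¬ (M (π (w a₀))).Indep
          (insert (w (a₀-1)) (swapSeq P π w n k (π (w a₀)))) := by
        have hsp : (M (π (w a₀))).Spans (swapSeq P π w n k (π (w a₀))) (w (a₀-1)) :=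
          (IH2 _ (w (a₀-1))).2 (Or.inr hdep)
        rcases hsp with h | h
        · exact absurd h ht_notin_swap
        · exact h
      have hCsub' : C ⊆ insert (w (a₀-1)) (swapSeq P π w n k (π (w a₀))) := by
        intro c hc
        rcases mem_insert.1 (hCsub hc) with rfl | hcP
        · exact mem_insert_self _ _
        · refine mem_insert_of_mem ?_
          rw [IH3]
          refine mem_union_left _ (mem_sdiff.2 ⟨hcP, ?_⟩)
          intro hmem
          obtain ⟨a', ha', heq⟩ := mem_image.1 hmem
          simp only [procSet, mem_filter, mem_range] at ha'
          exact hstair a' (by omega) ha'.1 ha'.2.2.2 (by rw [heq]; exact hc)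
      have hnew_ind : (M (π (w a₀))).Indep
          (insert (w (a₀-1)) ((swapSeq P π w n k (π (w a₀))).erase (w a₀))) :=
        ((M (π (w a₀))).exch_char (IH1 _) ht_notin_swap hCsub' hCdep hCmin hs_in_swap).2 hsC
      have hspans_new :=
        (M (π (w a₀))).spans_exchange (IH1 _) hs_in_swap ht_dep_swap hnew_ind
      have hs_not_T : w a₀ ∉ (procSet π w n k (π (w a₀))).image (fun a => w (a-1)) := by
        intro hmem
        obtain ⟨a', ha', heq⟩ := mem_image.1 hmem
        simp only [procSet, mem_filter, mem_range] at ha'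
        have h1 : a' - 1 < n := by omega
        have heq2 := pw_inj (vs:=vs) (hne:=hne) (hnd:=hnd) h1 ha₀n heq
        have ha'eq : a' = a₀ + 1 := by omega
        subst ha'eq
        have h := pair_t_not_mem (M:=M) (P:=P) (π:=π) (hπ:=hπ) (j:=j) (vs:=vs) (hne:=hne)
          (hind:=hind) (hchain:=hchain) (a:=a₀+1) (by omega) ha'.1
        rw [show a₀ + 1 - 1 = a₀ from rfl] at h
        rw [ha'.2.2.2] at h
        exact h hs_mem
      have hstep : ∀ i, swapSeq P π w n (k+1) i =
          if π (w a₀) = i then insert (w (a₀-1)) ((swapSeq P π w n k i).erase (w a₀))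
          else swapSeq P π w n k i := by
        intro i
        simp only [swapSeq]
        rw [hidx, ← ha₀def]
      have hproc : ∀ i, procSet π w n (k+1) i =
          if π (w a₀) = i then insert a₀ (procSet π w n k i) else procSet π w n k i := by
        intro i
        by_cases hii : π (w a₀) = i
        · rw [if_pos hii]
          ext a
          simp only [procSet, mem_filter, mem_range, mem_insert]
          constructor
          · rintro ⟨h1, h2, h3, h4⟩
            by_cases haa : a = a₀
            · exact Or.inl haa
            · exact Or.inr ⟨h1, by omega, h3, h4⟩
          · rintro (rfl | ⟨h1, h2, h3, h4⟩)
            · exact ⟨ha₀n, by omega, ha₀1, hii⟩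
            · exact ⟨h1, by omega, h3, h4⟩
        · rw [if_neg hii]
          ext a
          simp only [procSet, mem_filter, mem_range]
          constructor
          · rintro ⟨h1, h2, h3, h4⟩
            refine ⟨h1, ?_, h3, h4⟩
            by_cases haa : a = a₀
            · exfalso; apply hii; rw [haa] at h4; exact h4
            · omega
          · rintro ⟨h1, h2, h3, h4⟩
            exact ⟨h1, by omega, h3, h4⟩
      refine ⟨?_, ?_, ?_⟩
      · intro i
        rw [hstep]
        by_cases hii : π (w a₀) = i
        · rw [if_pos hii]; rw [← hii]; exact hnew_ind
        · rw [if_neg hii]; exact IH1 i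
      · intro i x
        rw [hstep]
        by_cases hii : π (w a₀) = i
        · rw [if_pos hii]; rw [← hii]
          exact (hspans_new x).trans (IH2 _ x)
        · rw [if_neg hii]; exact IH2 i x
      · intro i
        rw [hstep, hproc]
        by_cases hii : π (w a₀) = i
        · rw [if_pos hii, if_pos hii, ← hii]
          rw [IH3, image_insert, image_insert]
          ext x
          simp only [mem_insert, mem_erase, mem_union, mem_sdiff]
          constructor
          · rintro (rfl | ⟨hxs, (⟨h1, h2⟩ | h3)⟩)
            · exact Or.inr (Or.inl rfl)
            · exact Or.inl ⟨h1, not_or.2 ⟨hxs, h2⟩⟩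
            · exact Or.inr (Or.inr h3)
          · rintro (⟨h1, h2⟩ | (rfl | h3))
            · rw [not_or] at h2
              exact Or.inr ⟨h2.1, Or.inl ⟨h1, h2.2⟩⟩
            · exact Or.inl rfl
            · exact Or.inr ⟨fun hc => hs_not_T (hc ▸ h3), Or.inr h3⟩
        · rw [if_neg hii, if_neg hii]
          exact IH3 i

include hne in
lemma mem_procSet_final {a : ℕ} {i : ι} :
    a ∈ procSet π (pw vs hne) vs.length (vs.length - 1) i ↔
      1 ≤ a ∧ a < vs.length ∧ π (pw vs hne a) = i := by
  have hn1 : 1 ≤ vs.length := npos (vs := vs) (hne := hne)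
  simp only [procSet, mem_filter, mem_range]
  constructor
  · rintro ⟨h1, h2, h3, h4⟩; exact ⟨h3, h1, h4⟩
  · rintro ⟨h1, h2, h3⟩; exact ⟨h2, by omega, h1, h3⟩

include hne in
lemma pw_getElem {a : ℕ} (ha : a < vs.length) : vs[a] = pw vs hne a :=
  (List.getD_eq_getElem vs _ ha).symm

include hne hnd hind hπ hchain hshort in
lemma upd_eq (i : ι) : updatePartition P π vs hne j i =
    if i = j then insert (pw vs hne (vs.length - 1))
        (swapSeq P π (pw vs hne) vs.length (vs.length - 1) i)
      else swapSeq P π (pw vs hne) vs.length (vs.length - 1) i := by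
  have hn1 : 1 ≤ vs.length := npos (vs := vs) (hne := hne)
  obtain ⟨-, -, hdesc⟩ := swap_inv (M:=M) (P:=P) (π:=π) (j:=j) (vs:=vs) (hne:=hne)
    (hnd:=hnd) (hind:=hind) (hπ:=hπ) (hchain:=hchain) (hshort:=hshort)
    (vs.length - 1) le_rfl
  have hA : (vs.tail.filter (fun v => π v = i)).toFinset
      = (procSet π (pw vs hne) vs.length (vs.length - 1) i).image (pw vs hne) := by
    ext x
    simp only [List.mem_toFinset, List.mem_filter, decide_eq_true_eq, mem_image]
    constructor
    · rintro ⟨hmem, hπx⟩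
      obtain ⟨b, hb, hbx⟩ := List.mem_iff_getElem.1 hmem
      have hb' : b + 1 < vs.length := by
        rw [List.length_tail] at hb; omega
      rw [List.getElem_tail] at hbx
      rw [pw_getElem (vs:=vs) (hne:=hne) hb'] at hbx
      refine ⟨b+1, ?_, hbx⟩
      rw [mem_procSet_final (vs:=vs) (hne:=hne)]
      exact ⟨by omega, hb', by rw [hbx]; exact hπx⟩
    · rintro ⟨a, ha, hax⟩
      rw [mem_procSet_final (vs:=vs) (hne:=hne)] at ha
      obtain ⟨h1, h2, h3⟩ := ha
      obtain ⟨b, rfl⟩ : ∃ b, a = b + 1 := ⟨a-1, by omega⟩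
      constructor
      · apply List.mem_iff_getElem.2
        refine ⟨b, by rw [List.length_tail]; omega, ?_⟩
        rw [List.getElem_tail, pw_getElem (vs:=vs) (hne:=hne) h2]
        exact hax
      · rw [← hax]; exact h3
  have hlz : (vs.zip vs.tail).length = vs.length - 1 := by
    rw [List.length_zip, List.length_tail]
    omega
  have hB : (((vs.zip vs.tail).filter (fun p => π p.2 = i)).map Prod.fst).toFinset
      = (procSet π (pw vs hne) vs.length (vs.length - 1) i).image
          (fun a => pw vs hne (a-1)) := by
    ext x
    simp only [List.mem_toFinset, List.mem_map, List.mem_filter, decide_eq_true_eq, mem_image]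
    constructor
    · rintro ⟨p, ⟨hpz, hpi⟩, hpx⟩
      obtain ⟨b, hb, hbp⟩ := List.mem_iff_getElem.1 hpz
      rw [hlz] at hb
      rw [List.getElem_zip] at hbp
      have hb1 : b + 1 < vs.length := by omega
      have hbv : b < vs.length := by omega
      refine ⟨b+1, ?_, ?_⟩
      · rw [mem_procSet_final (vs:=vs) (hne:=hne)]
        refine ⟨by omega, hb1, ?_⟩
        rw [← pw_getElem (vs:=vs) (hne:=hne) hb1]
        have : p.2 = vs[b+1] := by
          rw [← hbp]
          simp only []
          rw [List.getElem_tail]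
        rw [← this]
        exact hpi
      · rw [show b + 1 - 1 = b from rfl, ← pw_getElem (vs:=vs) (hne:=hne) hbv]
        have : p.1 = vs[b] := by rw [← hbp]
        rw [← this]
        exact hpx
    · rintro ⟨a, ha, hax⟩
      rw [mem_procSet_final (vs:=vs) (hne:=hne)] at ha
      obtain ⟨h1, h2, h3⟩ := ha
      obtain ⟨b, rfl⟩ : ∃ b, a = b + 1 := ⟨a-1, by omega⟩
      have hb : b < (vs.zip vs.tail).length := by rw [hlz]; omega
      refine ⟨(vs.zip vs.tail)[b]'hb, ⟨List.getElem_mem hb, ?_⟩, ?_⟩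
      · rw [List.getElem_zip]
        show π (vs.tail[b]'(by rw [List.length_tail]; omega)) = i
        rw [List.getElem_tail, pw_getElem (vs:=vs) (hne:=hne) h2]
        exact h3
      · rw [List.getElem_zip]
        show (vs[b]'(by omega)) = x
        rw [pw_getElem (vs:=vs) (hne:=hne) (show b < vs.length by omega)]
        exact hax
  have hC : vs.getLast hne = pw vs hne (vs.length - 1) := by
    rw [List.getLast_eq_getElem]
    exact pw_getElem (vs:=vs) (hne:=hne) (by omega)
  simp only [updatePartition]
  rw [hA, hB, ← hdesc i]
  by_cases hij : i = j
  · rw [if_pos hij, if_pos hij, hC, union_comm, ← insert_eq]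
  · rw [if_neg hij, if_neg hij, union_empty]

include hne hnd hind hπ hchain hshort in
lemma upd_indep (i : ι) : (M i).Indep (updatePartition P π vs hne j i) := by
  rw [upd_eq (M:=M) (P:=P) (π:=π) (j:=j) (vs:=vs) (hne:=hne) (hnd:=hnd) (hind:=hind)
    (hπ:=hπ) (hchain:=hchain) (hshort:=hshort)]
  obtain ⟨h1, h2, -⟩ := swap_inv (M:=M) (P:=P) (π:=π) (j:=j) (vs:=vs) (hne:=hne)
    (hnd:=hnd) (hind:=hind) (hπ:=hπ) (hchain:=hchain) (hshort:=hshort)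
    (vs.length - 1) le_rfl
  by_cases hij : i = j
  · subst hij
    rw [if_pos rfl]
    have hz := last_snk (M:=M) (P:=P) (j:=i) (vs:=vs) (hne:=hne) (hchain:=hchain)
    have hnsp : ¬ (M i).Spans (P i) (pw vs hne (vs.length - 1)) := by
      rintro (h | h)
      · exact hz.1 h
      · exact h hz.2
    have hnsp' : ¬ (M i).Spans (swapSeq P π (pw vs hne) vs.length (vs.length - 1) i)
        (pw vs hne (vs.length - 1)) := fun h => hnsp ((h2 i _).1 h)
    exact ((M i).not_spans hnsp').2
  · rw [if_neg hij]; exact h1 i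

include hne hnd hind hπ hchain hshort in
lemma upd_cover {x : V} {i : ι} (hx : x ∈ P i) :
    x ∈ Finset.univ.biUnion (updatePartition P π vs hne j) := by
  have hn1 : 1 ≤ vs.length := npos (vs := vs) (hne := hne)
  obtain ⟨-, -, hdesc⟩ := swap_inv (M:=M) (P:=P) (π:=π) (j:=j) (vs:=vs) (hne:=hne)
    (hnd:=hnd) (hind:=hind) (hπ:=hπ) (hchain:=hchain) (hshort:=hshort)
    (vs.length - 1) le_rfl
  by_cases hxv : x ∈ swapSeq P π (pw vs hne) vs.length (vs.length - 1) i
  · refine mem_biUnion.2 ⟨i, mem_univ _, ?_⟩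
    rw [upd_eq (M:=M) (P:=P) (π:=π) (j:=j) (vs:=vs) (hne:=hne) (hnd:=hnd) (hind:=hind)
      (hπ:=hπ) (hchain:=hchain) (hshort:=hshort)]
    by_cases hij : i = j
    · rw [if_pos hij]; exact mem_insert_of_mem hxv
    · rw [if_neg hij]; exact hxv
  · rw [hdesc i] at hxv
    have hxY : x ∈ (procSet π (pw vs hne) vs.length (vs.length - 1) i).image (pw vs hne) := by
      by_contra hno
      exact hxv (mem_union_left _ (mem_sdiff.2 ⟨hx, hno⟩))
    obtain ⟨a, ha, hax⟩ := mem_image.1 hxY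
    rw [mem_procSet_final (vs:=vs) (hne:=hne)] at ha
    by_cases hlast : a = vs.length - 1
    · refine mem_biUnion.2 ⟨j, mem_univ _, ?_⟩
      rw [upd_eq (M:=M) (P:=P) (π:=π) (j:=j) (vs:=vs) (hne:=hne) (hnd:=hnd) (hind:=hind)
        (hπ:=hπ) (hchain:=hchain) (hshort:=hshort), if_pos rfl, ← hax, hlast]
      exact mem_insert_self _ _
    · have ha1 : a + 1 < vs.length := by omega
      refine mem_biUnion.2 ⟨π (pw vs hne (a+1)), mem_univ _, ?_⟩
      rw [upd_eq (M:=M) (P:=P) (π:=π) (j:=j) (vs:=vs) (hne:=hne) (hnd:=hnd) (hind:=hind)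
        (hπ:=hπ) (hchain:=hchain) (hshort:=hshort)]
      have hmem : x ∈ swapSeq P π (pw vs hne) vs.length (vs.length - 1)
          (π (pw vs hne (a+1))) := by
        rw [hdesc]
        refine mem_union_right _ (mem_image.2 ⟨a+1, ?_, ?_⟩)
        · rw [mem_procSet_final (vs:=vs) (hne:=hne)]
          exact ⟨by omega, ha1, rfl⟩
        · rw [show a + 1 - 1 = a from rfl]; exact hax
      by_cases hj2 : π (pw vs hne (a+1)) = j
      · rw [if_pos hj2]; exact mem_insert_of_mem hmem
      · rw [if_neg hj2]; exact hmem



include hne hnd hind hπ hchain hshort in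
lemma crux_core {i : ι} {u x : V}
    (hsp : (M i).Spans (P i) u)
    (huS' : u ∉ updatePartition P π vs hne j i)
    (hwS' : x ∈ updatePartition P π vs hne j i)
    (hdep' : ¬ (M i).Indep (insert u (updatePartition P π vs hne j i)))
    (hex' : (M i).Indep (insert u ((updatePartition P π vs hne j i).erase x))) :
    (u ∉ P i ∧ ¬ (M i).Indep (insert u (P i)) ∧ x ∈ P i ∧
      (M i).Indep (insert u ((P i).erase x)))
    ∨ ∃ a, pairPred π (pw vs hne) vs.length i a ∧
        ActChain (pairPred π (pw vs hne) vs.length i)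
          (edgePred (M i) (P i) (pw vs hne))
          (seedPred (M i) (P i) (pw vs hne) u) a ∧
        (x = pw vs hne (a-1) ∨ (x ∈ P i ∧
          (M i).Indep (insert (pw vs hne (a-1)) ((P i).erase x)))) := by
  classical
  have hn1 : 1 ≤ vs.length := npos (vs := vs) (hne := hne)
  obtain ⟨hVind, hVsp, hdesc⟩ := swap_inv (M:=M) (P:=P) (π:=π) (j:=j) (vs:=vs) (hne:=hne)
    (hnd:=hnd) (hind:=hind) (hπ:=hπ) (hchain:=hchain) (hshort:=hshort)
    (vs.length - 1) le_rfl
  have hupd := upd_eq (M:=M) (P:=P) (π:=π) (j:=j) (vs:=vs) (hne:=hne) (hnd:=hnd)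
    (hind:=hind) (hπ:=hπ) (hchain:=hchain) (hshort:=hshort) (i := i)
  have hupdind := upd_indep (M:=M) (P:=P) (π:=π) (j:=j) (vs:=vs) (hne:=hne) (hnd:=hnd)
    (hind:=hind) (hπ:=hπ) (hchain:=hchain) (hshort:=hshort) (i := i)
  set w : ℕ → V := pw vs hne with hwdef
  set n := vs.length with hndef
  set Vi := swapSeq P π w n (n - 1) i with hVidef
  -- u not in Vi
  have hVsub : Vi ⊆ updatePartition P π vs hne j i := by
    rw [hupd]
    by_cases hij : i = j
    · rw [if_pos hij]; exact subset_insert _ _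
    · rw [if_neg hij]
  have huV : u ∉ Vi := fun h => huS' (hVsub h)
  -- reduce edge facts to Vi
  have hdepVi : ¬ (M i).Indep (insert u Vi) := by
    have hspV : (M i).Spans Vi u := (hVsp i u).2 hsp
    rcases hspV with h | h
    · exact absurd h huV
    · exact h
  have hredux : x ∈ Vi ∧ (M i).Indep (insert u (Vi.erase x)) := by
    by_cases hij : i = j
    · rw [hupd, if_pos hij] at hwS' hex' huS'
      obtain ⟨C0, hC01, hC02, hC03⟩ := (M i).exists_minimal_dep hdepVi
      have hC0sub : C0 ⊆ insert u (insert (w (n-1)) Vi) := by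
        refine hC01.trans ?_
        intro c hc
        rcases mem_insert.1 hc with rfl | hcV
        · exact mem_insert_self _ _
        · exact mem_insert_of_mem (mem_insert_of_mem hcV)
      have hupdind' : (M i).Indep (insert (w (n-1)) Vi) := by
        have := hupdind; rwa [hupd, if_pos hij] at this
      have hxC0 : x ∈ C0 :=
        ((M i).exch_char hupdind' huS' hC0sub hC02 hC03 hwS').1 hex'
      have hxVi : x ∈ Vi := by
        rcases mem_insert.1 (hC01 hxC0) with h | h
        · exact absurd hwS' (h ▸ huS')
        · exact h
      exact ⟨hxVi, ((M i).exch_char (hVind i) huV hC01 hC02 hC03 hxVi).2 hxC0⟩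
    · rw [hupd, if_neg hij] at hwS' hex'
      exact ⟨hwS', hex'⟩
  obtain ⟨hxVi, hexVi⟩ := hredux
  -- membership helper : elements of P i not in Vi are removed pair elements
  have hSnotV : ∀ y, y ∈ P i → y ∉ Vi → ∃ a', pairPred π w n i a' ∧ w a' = y := by
    intro y hyS hyV
    rw [hVidef, hdesc i] at hyV
    have hyY : y ∈ (procSet π w n (n - 1) i).image w := by
      by_contra hno
      exact hyV (mem_union_left _ (mem_sdiff.2 ⟨hyS, hno⟩))
    obtain ⟨a', ha', ha'y⟩ := mem_image.1 hyY
    rw [mem_procSet_final (vs:=vs) (hne:=hne)] at ha'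
    exact ⟨a', ha', ha'y⟩
  -- pair facts transported to part i
  have hpairS : ∀ a, pairPred π w n i a →
      w a ∈ P i ∧ ¬ (M i).Indep (insert (w (a-1)) (P i)) ∧
        (M i).Indep (insert (w (a-1)) ((P i).erase (w a))) := by
    rintro a ⟨h1, h2, h3⟩
    have := pair_mem (M:=M) (P:=P) (π:=π) (hπ:=hπ) (j:=j) (vs:=vs) (hne:=hne)
      (hchain:=hchain) h1 h2
    rwa [h3] at this
  have htnm : ∀ a, pairPred π w n i a → w (a-1) ∉ P i := by
    rintro a ⟨h1, h2, h3⟩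
    have := pair_t_not_mem (M:=M) (P:=P) (π:=π) (hπ:=hπ) (j:=j) (vs:=vs) (hne:=hne)
      (hind:=hind) (hchain:=hchain) h1 h2
    rwa [h3] at this
  -- circuits for pairs
  have hCex : ∀ a, pairPred π w n i a → ∃ C, C ⊆ insert (w (a-1)) (P i) ∧
      ¬ (M i).Indep C ∧ ∀ y ∈ C, (M i).Indep (C.erase y) := by
    intro a ha
    exact (M i).exists_minimal_dep (hpairS a ha).2.1
  have hCex' : ∀ a, ∃ C : Finset V, pairPred π w n i a →
      C ⊆ insert (w (a-1)) (P i) ∧ ¬ (M i).Indep C ∧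
        ∀ y ∈ C, (M i).Indep (C.erase y) := by
    intro a
    by_cases h : pairPred π w n i a
    · exact (hCex a h).imp fun C hC => fun _ => hC
    · exact ⟨∅, fun h' => absurd h' h⟩
  choose Ca hCa using hCex'
  have hchar : ∀ a, pairPred π w n i a → ∀ y, y ∈ P i →
      ((M i).Indep (insert (w (a-1)) ((P i).erase y)) ↔ y ∈ Ca a) := by
    intro a ha y hy
    exact (M i).exch_char (hind i) (htnm a ha) (hCa a ha).1 (hCa a ha).2.1 (hCa a ha).2.2 hy
  -- circuit elements have exchanges
  have helem : ∀ b, pairPred π w n i b → ∀ y ∈ Ca b, y ≠ w (b-1) →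
      y ∈ P i ∧ (M i).Indep (insert (w (b-1)) ((P i).erase y)) := by
    intro b hb y hyC hyt
    have hyS : y ∈ P i := (mem_insert.1 ((hCa b hb).1 hyC)).resolve_left hyt
    exact ⟨hyS, (hchar b hb y hyS).2 hyC⟩
  -- staircase order fact
  have horder : ∀ a b, pairPred π w n i a → pairPred π w n i b → w a ∈ Ca b → a ≤ b := by
    intro a b ha hb hmem
    obtain ⟨hb1, hb2, hb3⟩ := hb
    have hb : pairPred π w n i b := ⟨hb1, hb2, hb3⟩
    have hedge : compAdj M P (CVert.elt (w (b-1))) (CVert.elt (w a)) :=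
      ⟨i, (hpairS a ha).1, (hpairS b hb).2.1, (helem b hb _ hmem (by
        intro hcon
        exact (htnm b hb) (hcon ▸ (hpairS a ha).1))).2⟩
    have hr1 : reachIn (compAdj M P) (b-1+1) CVert.src (CVert.elt (w (b-1))) :=
      reach_src_pw (M:=M) (P:=P) (j:=j) (vs:=vs) (hne:=hne) (hchain:=hchain)
        (by omega : b - 1 < vs.length)
    have hr2 : reachIn (compAdj M P) ((b-1+1)+1) CVert.src (CVert.elt (w a)) :=
      reachIn_trans hr1 ⟨_, hedge, rfl⟩
    have := src_lb (M:=M) (P:=P) (j:=j) (vs:=vs) (hne:=hne) (hchain:=hchain)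
      (hshort:=hshort) (ha.2.1 : a < vs.length) hr2
    obtain ⟨hb1, -, -⟩ := hb
    omega
  -- the allowed set X
  set X : Finset V := Vi.filter (fun y =>
    (y ∈ P i ∧ u ∉ P i ∧ ¬ (M i).Indep (insert u (P i)) ∧
      (M i).Indep (insert u ((P i).erase y))) ∨
    ∃ a, ActChain (pairPred π w n i) (edgePred (M i) (P i) w) (seedPred (M i) (P i) w u) a ∧
      y ∈ Ca a) with hXdef
  have hXsub : X ⊆ Vi := filter_subset _ _
  have hXind : (M i).Indep X := (M i).indep_subset (hVind i) hXsub
  -- the cascade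
  have hcasc : ∀ a, pairPred π w n i a →
      ActChain (pairPred π w n i) (edgePred (M i) (P i) w) (seedPred (M i) (P i) w u) a →
      (M i).Spans X (w a) := by
    intro a
    induction a using Nat.strong_induction_on with
    | _ a IH =>
      intro hpa hact
      have hsa : w a ∈ Ca a := (hchar a hpa _ (hpairS a hpa).1).1 (hpairS a hpa).2.2
      have hBind : (M i).Indep ((Ca a).erase (w a)) := (hCa a hpa).2.2 _ hsa
      have hBsp : ∀ y ∈ (Ca a).erase (w a), (M i).Spans X y := by
        intro y hy
        obtain ⟨hyne, hyC⟩ := mem_erase.1 hy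
        by_cases hyt : y = w (a-1)
        · subst hyt
          refine Or.inl (mem_filter.2 ⟨?_, Or.inr ⟨a, hact, hyC⟩⟩)
          rw [hVidef, hdesc i]
          refine mem_union_right _ (mem_image.2 ⟨a, ?_, rfl⟩)
          rw [mem_procSet_final (vs:=vs) (hne:=hne)]
          exact hpa
        · obtain ⟨hyS, hyex⟩ := helem a hpa y hyC hyt
          by_cases hyV : y ∈ Vi
          · exact Or.inl (mem_filter.2 ⟨hyV, Or.inr ⟨a, hact, hyC⟩⟩)
          · obtain ⟨a', hpa', ha'y⟩ := hSnotV y hyS hyV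
            have ha'a : a' ≤ a := horder a' a hpa' hpa (by rw [ha'y]; exact hyC)
            have hne' : a' ≠ a := fun h => hyne (by rw [← ha'y, h])
            have hact' : ActChain (pairPred π w n i) (edgePred (M i) (P i) w)
                (seedPred (M i) (P i) w u) a' :=
              ActChain.step a' a hpa' hact (by
                show (M i).Indep (insert (w (a-1)) ((P i).erase (w a')))
                rw [ha'y]; exact hyex)
            exact ha'y ▸ IH a' (by omega) hpa' hact'
      exact (M i).spans_trans hXind hBind hBsp
        ((M i).mem_of_minimal_dep (hCa a hpa).2.1 hsa)
  -- u is spanned by X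
  have hucase : (u ∉ P i ∧ ¬ (M i).Indep (insert u (P i))) ∨
      ∃ p, pairPred π w n i p ∧ w p = u := by
    by_cases huS : u ∈ P i
    · exact Or.inr (hSnotV u huS huV)
    · rcases hsp with h | h
      · exact absurd h huS
      · exact Or.inl ⟨huS, h⟩
  have huX : (M i).Spans X u := by
    rcases hucase with ⟨huS, hudep⟩ | ⟨p, hpp, hup⟩
    · obtain ⟨Cu, hCu1, hCu2, hCu3⟩ := (M i).exists_minimal_dep hudep
      have huCu : u ∈ Cu := by
        by_contra h
        exact hCu2 ((M i).indep_subset (hind i) (fun c hc =>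
          (mem_insert.1 (hCu1 hc)).resolve_left (fun e => h (e ▸ hc))))
      have hucharS : ∀ y, y ∈ P i → ((M i).Indep (insert u ((P i).erase y)) ↔ y ∈ Cu) :=
        fun y hy => (M i).exch_char (hind i) huS hCu1 hCu2 hCu3 hy
      have hBsp : ∀ y ∈ Cu.erase u, (M i).Spans X y := by
        intro y hy
        obtain ⟨hyne, hyC⟩ := mem_erase.1 hy
        have hyS : y ∈ P i := (mem_insert.1 (hCu1 hyC)).resolve_left hyne
        have hyex : (M i).Indep (insert u ((P i).erase y)) := (hucharS y hyS).2 hyC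
        by_cases hyV : y ∈ Vi
        · exact Or.inl (mem_filter.2 ⟨hyV, Or.inl ⟨hyS, huS, hudep, hyex⟩⟩)
        · obtain ⟨a', hpa', ha'y⟩ := hSnotV y hyS hyV
          have hact' : ActChain (pairPred π w n i) (edgePred (M i) (P i) w)
              (seedPred (M i) (P i) w u) a' :=
            ActChain.base a' hpa' (Or.inl ⟨huS, hudep, by
              show (M i).Indep (insert u ((P i).erase (w a')))
              rw [ha'y]; exact hyex⟩)
          exact ha'y ▸ hcasc a' hpa' hact'
      exact (M i).spans_trans hXind (hCu3 u huCu) hBsp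
        ((M i).mem_of_minimal_dep hCu2 huCu)
    · have hact : ActChain (pairPred π w n i) (edgePred (M i) (P i) w)
          (seedPred (M i) (P i) w u) p :=
        ActChain.base p hpp (Or.inr hup.symm)
      rw [← hup]
      exact hcasc p hpp hact
  -- extract the final circuit within X
  have huXn : u ∉ X := fun h => huV (hXsub h)
  have huXdep : ¬ (M i).Indep (insert u X) := by
    rcases huX with h | h
    · exact absurd h huXn
    · exact h
  obtain ⟨C2, hC21, hC22, hC23⟩ := (M i).exists_minimal_dep huXdep
  have hC2sub : C2 ⊆ insert u Vi :=
    hC21.trans (insert_subset_insert _ hXsub)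
  have hxC2 : x ∈ C2 :=
    ((M i).exch_char (hVind i) huV hC2sub hC22 hC23 hxVi).1 hexVi
  have hxX : x ∈ X := by
    rcases mem_insert.1 (hC21 hxC2) with h | h
    · exact absurd hwS' (h ▸ huS')
    · exact h
  obtain ⟨hxVi2, hgood⟩ := mem_filter.1 hxX
  rcases hgood with ⟨hxS, huS, hudep, hxex⟩ | ⟨a, hact, hxCa⟩
  · exact Or.inl ⟨huS, hudep, hxS, hxex⟩
  · have hpa : pairPred π w n i a := hact.pair_of
    refine Or.inr ⟨a, hpa, hact, ?_⟩
    by_cases hxt : x = w (a-1)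
    · exact Or.inl hxt
    · obtain ⟨hxS, hxex⟩ := helem a hpa x hxCa hxt
      exact Or.inr ⟨hxS, hxex⟩



include hne hπ hchain in
lemma pairS {i : ι} {a : ℕ} (hpa : pairPred π (pw vs hne) vs.length i a) :
    pw vs hne a ∈ P i ∧ ¬ (M i).Indep (insert (pw vs hne (a-1)) (P i)) ∧
      (M i).Indep (insert (pw vs hne (a-1)) ((P i).erase (pw vs hne a))) := by
  obtain ⟨h1, h2, h3⟩ := hpa
  have := pair_mem (M:=M) (P:=P) (π:=π) (hπ:=hπ) (j:=j) (vs:=vs) (hne:=hne)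
    (hchain:=hchain) h1 h2
  rwa [h3] at this

include hne hnd hind hπ hchain hshort in
lemma crux_s {u x : V} {m : ℕ} (hm : m + 2 ≤ vs.length + 1)
    (hr : reachIn (compAdj M P) m CVert.src (CVert.elt u))
    (hadj : compAdj M (updatePartition P π vs hne j) (CVert.elt u) (CVert.elt x)) :
    ddist (compAdj M P) CVert.src (CVert.elt x) ≤ ((m + 1 : ℕ) : ℕ∞) := by
  obtain ⟨i, hwm, hdep', hex'⟩ := hadj
  have hsp : (M i).Spans (P i) u := by
    by_contra hno
    obtain ⟨hu1, hu2⟩ := (M i).not_spans hno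
    have hr2 : reachIn (compAdj M P) (m+1) CVert.src (CVert.snk i) :=
      reachIn_trans hr (reachIn_one (⟨hu1, hu2⟩ : compAdj M P (CVert.elt u) (CVert.snk i)))
    have := snk_lb (M:=M) (P:=P) (vs:=vs) (hshort:=hshort) hr2
    omega
  have huS' : u ∉ updatePartition P π vs hne j i := by
    intro h
    exact hdep' (by
      rw [insert_eq_self.2 h]
      exact upd_indep (M:=M) (P:=P) (π:=π) (j:=j) (vs:=vs) (hne:=hne) (hnd:=hnd)
        (hind:=hind) (hπ:=hπ) (hchain:=hchain) (hshort:=hshort) (i := i))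
  have main := crux_core (M:=M) (P:=P) (π:=π) (j:=j) (vs:=vs) (hne:=hne) (hnd:=hnd)
    (hind:=hind) (hπ:=hπ) (hchain:=hchain) (hshort:=hshort) hsp huS' hwm hdep' hex'
  rcases main with ⟨hu1, hu2, hx1, hx2⟩ | ⟨a, hpa, hact, hxcase⟩
  · have hedge : compAdj M P (CVert.elt u) (CVert.elt x) := ⟨i, hx1, hu2, hx2⟩
    have := reachIn_trans hr (reachIn_one hedge)
    exact ddist_le_of_reachIn this
  · have hbound : ∀ b, ActChain (pairPred π (pw vs hne) vs.length i)
        (edgePred (M i) (P i) (pw vs hne)) (seedPred (M i) (P i) (pw vs hne) u) b →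
        b ≤ m := by
      intro b hb
      induction hb with
      | base c hpc hseed =>
          have hps := pairS (M:=M) (P:=P) (π:=π) (hπ:=hπ) (j:=j) (vs:=vs) (hne:=hne)
            (hchain:=hchain) hpc
          rcases hseed with ⟨h1, h2, h3⟩ | h4
          · have hedge : compAdj M P (CVert.elt u) (CVert.elt (pw vs hne c)) :=
              ⟨i, hps.1, h2, h3⟩
            have hr2 := reachIn_trans hr (reachIn_one hedge)
            have := src_lb (M:=M) (P:=P) (j:=j) (vs:=vs) (hne:=hne) (hchain:=hchain)
              (hshort:=hshort) hpc.2.1 hr2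
            omega
          · have hr2 : reachIn (compAdj M P) m CVert.src (CVert.elt (pw vs hne c)) :=
              h4 ▸ hr
            have := src_lb (M:=M) (P:=P) (j:=j) (vs:=vs) (hne:=hne) (hchain:=hchain)
              (hshort:=hshort) hpc.2.1 hr2
            omega
      | step c b hpc hb hedge IH =>
          have hpb := hb.pair_of
          have hedge' : compAdj M P (CVert.elt (pw vs hne (b-1))) (CVert.elt (pw vs hne c)) :=
            ⟨i, (pairS (M:=M) (P:=P) (π:=π) (hπ:=hπ) (j:=j) (vs:=vs) (hne:=hne)
                (hchain:=hchain) hpc).1,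
              (pairS (M:=M) (P:=P) (π:=π) (hπ:=hπ) (j:=j) (vs:=vs) (hne:=hne)
                (hchain:=hchain) hpb).2.1, hedge⟩
          have hr1 := reach_src_pw (M:=M) (P:=P) (j:=j) (vs:=vs) (hne:=hne)
            (hchain:=hchain) (show b - 1 < vs.length by
              obtain ⟨hb1, hb2, -⟩ := hpb; omega)
          have hr2 := reachIn_trans hr1 (reachIn_one hedge')
          have := src_lb (M:=M) (P:=P) (j:=j) (vs:=vs) (hne:=hne) (hchain:=hchain)
            (hshort:=hshort) hpc.2.1 hr2
          obtain ⟨hb1, hb2, -⟩ := hpb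
          omega
    have ham : a ≤ m := hbound a hact
    have ha1 : 1 ≤ a := hpa.1
    have ha2 : a < vs.length := hpa.2.1
    rcases hxcase with hxt | ⟨hx1, hx2⟩
    · rw [hxt]
      have h := ddist_le_of_reachIn (reach_src_pw (M:=M) (P:=P) (j:=j) (vs:=vs) (hne:=hne)
        (hchain:=hchain) (show a - 1 < vs.length by omega))
      refine h.trans ?_
      exact_mod_cast (show a - 1 + 1 ≤ m + 1 by omega)
    · have hedge : compAdj M P (CVert.elt (pw vs hne (a-1))) (CVert.elt x) :=
        ⟨i, hx1, (pairS (M:=M) (P:=P) (π:=π) (hπ:=hπ) (j:=j) (vs:=vs) (hne:=hne)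
          (hchain:=hchain) hpa).2.1, hx2⟩
      have hr1 := reach_src_pw (M:=M) (P:=P) (j:=j) (vs:=vs) (hne:=hne)
        (hchain:=hchain) (show a - 1 < vs.length by omega)
      have hr2 := reachIn_trans hr1 (reachIn_one hedge)
      refine (ddist_le_of_reachIn hr2).trans ?_
      exact_mod_cast (show (a - 1 + 1) + 1 ≤ m + 1 by omega)

include hne hnd hind hπ hchain hshort in
lemma crux_t {u x : V} {m : ℕ} {i₀ : ι} (hm : m + 2 ≤ vs.length + 1)
    (hr : reachIn (compAdj M P) m (CVert.elt x) (CVert.snk i₀))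
    (hadj : compAdj M (updatePartition P π vs hne j) (CVert.elt u) (CVert.elt x)) :
    (⨅ i' : ι, ddist (compAdj M P) (CVert.elt u) (CVert.snk i')) ≤ ((m + 1 : ℕ) : ℕ∞) := by
  obtain ⟨i, hwm, hdep', hex'⟩ := hadj
  by_cases hsp : (M i).Spans (P i) u
  swap
  · obtain ⟨hu1, hu2⟩ := (M i).not_spans hsp
    have hedge : compAdj M P (CVert.elt u) (CVert.snk i) := ⟨hu1, hu2⟩
    have h1 : ddist (compAdj M P) (CVert.elt u) (CVert.snk i) ≤ (1 : ℕ) :=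
      ddist_le_of_reachIn (reachIn_one hedge)
    refine (iInf_le _ i).trans (h1.trans ?_)
    exact_mod_cast (show (1:ℕ) ≤ m + 1 by omega)
  · have huS' : u ∉ updatePartition P π vs hne j i := by
      intro h
      exact hdep' (by
        rw [insert_eq_self.2 h]
        exact upd_indep (M:=M) (P:=P) (π:=π) (j:=j) (vs:=vs) (hne:=hne) (hnd:=hnd)
          (hind:=hind) (hπ:=hπ) (hchain:=hchain) (hshort:=hshort) (i := i))
    have main := crux_core (M:=M) (P:=P) (π:=π) (j:=j) (vs:=vs) (hne:=hne) (hnd:=hnd)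
      (hind:=hind) (hπ:=hπ) (hchain:=hchain) (hshort:=hshort) hsp huS' hwm hdep' hex'
    rcases main with ⟨hu1, hu2, hx1, hx2⟩ | ⟨a, hpa, hact, hxcase⟩
    · have hedge : compAdj M P (CVert.elt u) (CVert.elt x) := ⟨i, hx1, hu2, hx2⟩
      have hr2 : reachIn (compAdj M P) (1 + m) (CVert.elt u) (CVert.snk i₀) :=
        reachIn_trans (reachIn_one hedge) hr
      refine (iInf_le _ i₀).trans ((ddist_le_of_reachIn hr2).trans ?_)
      exact_mod_cast (show 1 + m ≤ m + 1 by omega)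
    · -- invariant along the chain
      have hbound : ∀ b, ActChain (pairPred π (pw vs hne) vs.length i)
          (edgePred (M i) (P i) (pw vs hne)) (seedPred (M i) (P i) (pw vs hne) u) b →
          (⨅ i' : ι, ddist (compAdj M P) (CVert.elt u) (CVert.snk i'))
            ≤ ((vs.length + 1 - b : ℕ) : ℕ∞) := by
        intro b hb
        induction hb with
        | base c hpc hseed =>
            have hps := pairS (M:=M) (P:=P) (π:=π) (hπ:=hπ) (j:=j) (vs:=vs) (hne:=hne)
              (hchain:=hchain) hpc
            have hc2 : c < vs.length := hpc.2.1
            have hrs := reach_pw_snk (M:=M) (P:=P) (j:=j) (vs:=vs) (hne:=hne)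
              (hchain:=hchain) hc2
            rcases hseed with ⟨h1, h2, h3⟩ | h4
            · have hedge : compAdj M P (CVert.elt u) (CVert.elt (pw vs hne c)) :=
                ⟨i, hps.1, h2, h3⟩
              have hr2 : reachIn (compAdj M P) (1 + (vs.length - c))
                  (CVert.elt u) (CVert.snk j) :=
                reachIn_trans (reachIn_one hedge) hrs
              refine (iInf_le _ j).trans ((ddist_le_of_reachIn hr2).trans ?_)
              exact_mod_cast (show 1 + (vs.length - c) ≤ vs.length + 1 - c by omega)
            · have hr2 : reachIn (compAdj M P) (vs.length - c)
                  (CVert.elt u) (CVert.snk j) := h4 ▸ hrs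
              refine (iInf_le _ j).trans ((ddist_le_of_reachIn hr2).trans ?_)
              exact_mod_cast (show vs.length - c ≤ vs.length + 1 - c by omega)
        | step c b hpc hb hedge IH =>
            -- c ≤ b via order
            have hpb := hb.pair_of
            have hedge' : compAdj M P (CVert.elt (pw vs hne (b-1)))
                (CVert.elt (pw vs hne c)) :=
              ⟨i, (pairS (M:=M) (P:=P) (π:=π) (hπ:=hπ) (j:=j) (vs:=vs) (hne:=hne)
                  (hchain:=hchain) hpc).1,
                (pairS (M:=M) (P:=P) (π:=π) (hπ:=hπ) (j:=j) (vs:=vs) (hne:=hne)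
                  (hchain:=hchain) hpb).2.1, hedge⟩
            have hb1 : 1 ≤ b := hpb.1
            have hb2 : b < vs.length := hpb.2.1
            have hr1 := reach_src_pw (M:=M) (P:=P) (j:=j) (vs:=vs) (hne:=hne)
              (hchain:=hchain) (show b - 1 < vs.length by omega)
            have hr2 := reachIn_trans hr1 (reachIn_one hedge')
            have hcb := src_lb (M:=M) (P:=P) (j:=j) (vs:=vs) (hne:=hne) (hchain:=hchain)
              (hshort:=hshort) hpc.2.1 hr2
            refine IH.trans ?_
            exact_mod_cast (show vs.length + 1 - b ≤ vs.length + 1 - c by omega)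
      have hinv := hbound a hact
      have ha1 : 1 ≤ a := hpa.1
      have ha2 : a < vs.length := hpa.2.1
      rcases hxcase with hxt | ⟨hx1, hx2⟩
      · rw [hxt] at hr
        have hlb := snk_lb2 (M:=M) (P:=P) (j:=j) (vs:=vs) (hne:=hne) (hchain:=hchain)
          (hshort:=hshort) (show a - 1 < vs.length by omega) hr
        refine hinv.trans ?_
        exact_mod_cast (show vs.length + 1 - a ≤ m + 1 by omega)
      · have hedge : compAdj M P (CVert.elt (pw vs hne (a-1))) (CVert.elt x) :=
          ⟨i, hx1, (pairS (M:=M) (P:=P) (π:=π) (hπ:=hπ) (j:=j) (vs:=vs) (hne:=hne)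
            (hchain:=hchain) hpa).2.1, hx2⟩
        have hr2 : reachIn (compAdj M P) (1 + m) (CVert.elt (pw vs hne (a-1)))
            (CVert.snk i₀) :=
          reachIn_trans (reachIn_one hedge) hr
        have hlb := snk_lb2 (M:=M) (P:=P) (j:=j) (vs:=vs) (hne:=hne) (hchain:=hchain)
          (hshort:=hshort) (show a - 1 < vs.length by omega) hr2
        refine hinv.trans ?_
        exact_mod_cast (show vs.length + 1 - a ≤ m + 1 by omega)

include hne hnd hind hπ hchain hshort in
lemma sink_edge {v : V} {i' : ι}
    (h : compAdj M (updatePartition P π vs hne j) (CVert.elt v) (CVert.snk i')) :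
    (⨅ i'' : ι, ddist (compAdj M P) (CVert.elt v) (CVert.snk i'')) ≤ (1 : ℕ) := by
  obtain ⟨hv1, hv2⟩ := h
  obtain ⟨hVind, hVsp, -⟩ := swap_inv (M:=M) (P:=P) (π:=π) (j:=j) (vs:=vs) (hne:=hne)
    (hnd:=hnd) (hind:=hind) (hπ:=hπ) (hchain:=hchain) (hshort:=hshort)
    (vs.length - 1) le_rfl
  have hupd := upd_eq (M:=M) (P:=P) (π:=π) (j:=j) (vs:=vs) (hne:=hne) (hnd:=hnd)
    (hind:=hind) (hπ:=hπ) (hchain:=hchain) (hshort:=hshort) (i := i')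
  have hVsub : swapSeq P π (pw vs hne) vs.length (vs.length - 1) i'
      ⊆ updatePartition P π vs hne j i' := by
    rw [hupd]
    by_cases hij : i' = j
    · rw [if_pos hij]; exact subset_insert _ _
    · rw [if_neg hij]
  have hvP : v ∉ P i' ∧ (M i').Indep (insert v (P i')) := by
    by_contra hno
    have hspP : (M i').Spans (P i') v := by
      rw [FinMatroid.Spans]
      by_contra hno2
      push_neg at hno2
      exact hno ⟨hno2.1, hno2.2⟩
    have hspV : (M i').Spans (swapSeq P π (pw vs hne) vs.length (vs.length - 1) i') v :=
      (hVsp i' v).2 hspP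
    rcases hspV with h | h
    · exact hv1 (hVsub h)
    · exact ((M i').dep_mono h (insert_subset_insert _ hVsub)) hv2
  have hedge : compAdj M P (CVert.elt v) (CVert.snk i') := ⟨hvP.1, hvP.2⟩
  exact (iInf_le _ i').trans (ddist_le_of_reachIn (reachIn_one hedge))



include hne hnd hind hπ hchain hshort in
lemma src_edge {v : V}
    (h : compAdj M (updatePartition P π vs hne j) CVert.src (CVert.elt v)) :
    ddist (compAdj M P) CVert.src (CVert.elt v) ≤ (1 : ℕ) := by
  have hv : v ∉ Finset.univ.biUnion P := by
    intro hm
    obtain ⟨i, -, hi⟩ := mem_biUnion.1 hm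
    exact h (upd_cover (M:=M) (P:=P) (π:=π) (j:=j) (vs:=vs) (hne:=hne) (hnd:=hnd)
      (hind:=hind) (hπ:=hπ) (hchain:=hchain) (hshort:=hshort) hi)
  exact ddist_le_of_reachIn
    (reachIn_one (show compAdj M P CVert.src (CVert.elt v) from hv))

include hne hnd hind hπ hchain hshort in
lemma pot_s : ∀ (k : ℕ) (v : V),
    reachIn (compAdj M (updatePartition P π vs hne j)) k CVert.src (CVert.elt v) →
    min (ddist (compAdj M P) CVert.src (CVert.elt v)) ((vs.length + 1 : ℕ) : ℕ∞)
      ≤ (k : ℕ∞) := by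
  intro k
  induction k with
  | zero =>
      intro v h
      exact nomatch (show CVert.src = CVert.elt v from h)
  | succ k IH =>
      intro v h
      obtain ⟨z, hz, hzadj⟩ := reachIn_succ_iff_last.1 h
      match z with
      | CVert.snk i => exact absurd hzadj (fun hf => hf)
      | CVert.src =>
          have h1 := src_edge (M:=M) (P:=P) (π:=π) (j:=j) (vs:=vs) (hne:=hne) (hnd:=hnd)
            (hind:=hind) (hπ:=hπ) (hchain:=hchain) (hshort:=hshort) hzadj
          refine (min_le_left _ _).trans (h1.trans ?_)
          exact_mod_cast (show (1:ℕ) ≤ k + 1 by omega)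
      | CVert.elt u =>
          have h1 := IH u hz
          by_cases hcase : ddist (compAdj M P) CVert.src (CVert.elt u) + 1
              < ((vs.length + 1 : ℕ) : ℕ∞)
          · have hfin : ddist (compAdj M P) CVert.src (CVert.elt u)
                < ((vs.length + 1 : ℕ) : ℕ∞) := lt_of_le_of_lt le_self_add hcase
            have hne_top : ddist (compAdj M P) CVert.src (CVert.elt u) ≠ ⊤ :=
              ne_top_of_lt hfin
            lift ddist (compAdj M P) CVert.src (CVert.elt u) to ℕ using hne_top with c hc
            have hcL : c + 2 ≤ vs.length + 1 := by
              have h3 : (c + 1 : ℕ) < vs.length + 1 := by exact_mod_cast hcase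
              omega
            have hdd : ddist (compAdj M P) CVert.src (CVert.elt u) ≤ ((c : ℕ) : ℕ∞) := by
              first
              | exact le_of_eq hc
              | exact le_of_eq hc.symm
              | exact le_rfl
            obtain ⟨m, hmc, hmr⟩ := exists_reachIn_of_ddist_le hdd
            have hcr := crux_s (M:=M) (P:=P) (π:=π) (j:=j) (vs:=vs) (hne:=hne) (hnd:=hnd)
              (hind:=hind) (hπ:=hπ) (hchain:=hchain) (hshort:=hshort)
              (by omega : m + 2 ≤ vs.length + 1) hmr hzadj
            have hck : c ≤ k := by
              rw [min_eq_left hfin.le] at h1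
              exact_mod_cast h1
            refine (min_le_left _ _).trans (hcr.trans ?_)
            exact_mod_cast (show m + 1 ≤ k + 1 by omega)
          · push_neg at hcase
            refine (min_le_right _ _).trans ?_
            rcases le_or_gt ((vs.length + 1 : ℕ) : ℕ∞)
                (ddist (compAdj M P) CVert.src (CVert.elt u)) with hl | hl
            · rw [min_eq_right hl] at h1
              exact h1.trans (by exact_mod_cast Nat.le_succ k)
            · rw [min_eq_left hl.le] at h1
              calc ((vs.length + 1 : ℕ) : ℕ∞)
                  ≤ ddist (compAdj M P) CVert.src (CVert.elt u) + 1 := hcase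
                _ ≤ (k : ℕ∞) + 1 := add_le_add_left h1 1
                _ = ((k + 1 : ℕ) : ℕ∞) := by push_cast; ring

include hne hnd hind hπ hchain hshort in
lemma pot_t : ∀ (k : ℕ) (v : V) (i₀ : ι),
    reachIn (compAdj M (updatePartition P π vs hne j)) k (CVert.elt v) (CVert.snk i₀) →
    min (⨅ i' : ι, ddist (compAdj M P) (CVert.elt v) (CVert.snk i'))
        ((vs.length + 1 : ℕ) : ℕ∞) ≤ (k : ℕ∞) := by
  intro k
  induction k with
  | zero =>
      intro v i₀ h
      exact nomatch (show CVert.elt v = CVert.snk i₀ from h)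
  | succ k IH =>
      intro v i₀ h
      obtain ⟨z, hvz, hz⟩ := h
      match z with
      | CVert.src => exact absurd hvz (fun hf => hf)
      | CVert.snk i' =>
          have h1 := sink_edge (M:=M) (P:=P) (π:=π) (j:=j) (vs:=vs) (hne:=hne) (hnd:=hnd)
            (hind:=hind) (hπ:=hπ) (hchain:=hchain) (hshort:=hshort) hvz
          refine (min_le_left _ _).trans (h1.trans ?_)
          exact_mod_cast (show (1:ℕ) ≤ k + 1 by omega)
      | CVert.elt u =>
          have h1 := IH u i₀ hz
          by_cases hcase : (⨅ i' : ι, ddist (compAdj M P) (CVert.elt u) (CVert.snk i')) + 1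
              < ((vs.length + 1 : ℕ) : ℕ∞)
          · have hfin : (⨅ i' : ι, ddist (compAdj M P) (CVert.elt u) (CVert.snk i'))
                < ((vs.length + 1 : ℕ) : ℕ∞) := lt_of_le_of_lt le_self_add hcase
            have hne_top : (⨅ i' : ι, ddist (compAdj M P) (CVert.elt u) (CVert.snk i'))
                ≠ ⊤ := ne_top_of_lt hfin
            lift (⨅ i' : ι, ddist (compAdj M P) (CVert.elt u) (CVert.snk i')) to ℕ
              using hne_top with c hc
            have hcL : c + 2 ≤ vs.length + 1 := by
              have h3 : (c + 1 : ℕ) < vs.length + 1 := by exact_mod_cast hcase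
              omega
            have hlt1 : (⨅ i' : ι, ddist (compAdj M P) (CVert.elt u) (CVert.snk i'))
                < ((c + 1 : ℕ) : ℕ∞) := by
              have : ((c : ℕ) : ℕ∞) < ((c + 1 : ℕ) : ℕ∞) := by
                exact_mod_cast Nat.lt_succ_self c
              first
              | (rw [hc]; exact this)
              | (rw [← hc]; exact this)
              | exact this
            obtain ⟨i1, hi1⟩ := iInf_lt_iff.1 hlt1
            have hnt2 : ddist (compAdj M P) (CVert.elt u) (CVert.snk i1) ≠ ⊤ :=
              ne_top_of_lt hi1
            lift ddist (compAdj M P) (CVert.elt u) (CVert.snk i1) to ℕ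
              using hnt2 with d hd
            have hdc : d ≤ c := by
              have : (d : ℕ) < c + 1 := by exact_mod_cast hi1
              omega
            have hdd : ddist (compAdj M P) (CVert.elt u) (CVert.snk i1) ≤ ((d : ℕ) : ℕ∞) := by
              first
              | exact le_of_eq hd
              | exact le_of_eq hd.symm
              | exact le_rfl
            obtain ⟨m, hmd, hmr⟩ := exists_reachIn_of_ddist_le hdd
            have hcr := crux_t (M:=M) (P:=P) (π:=π) (j:=j) (vs:=vs) (hne:=hne) (hnd:=hnd)
              (hind:=hind) (hπ:=hπ) (hchain:=hchain) (hshort:=hshort)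
              (by omega : m + 2 ≤ vs.length + 1) hmr hvz
            have hck : c ≤ k := by
              rw [min_eq_left hfin.le] at h1
              exact_mod_cast h1
            refine (min_le_left _ _).trans (hcr.trans ?_)
            exact_mod_cast (show m + 1 ≤ k + 1 by omega)
          · push_neg at hcase
            refine (min_le_right _ _).trans ?_
            rcases le_or_gt ((vs.length + 1 : ℕ) : ℕ∞)
                (⨅ i' : ι, ddist (compAdj M P) (CVert.elt u) (CVert.snk i')) with hl | hl
            · rw [min_eq_right hl] at h1
              exact h1.trans (by exact_mod_cast Nat.le_succ k)
            · rw [min_eq_left hl.le] at h1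
              calc ((vs.length + 1 : ℕ) : ℕ∞)
                  ≤ (⨅ i' : ι, ddist (compAdj M P) (CVert.elt u) (CVert.snk i')) + 1 :=
                    hcase
                _ ≤ (k : ℕ∞) + 1 := add_le_add_left h1 1
                _ = ((k + 1 : ℕ) : ℕ∞) := by push_cast; ring

end Mono

/-- Monotonicity lemma for matroid partition: after augmenting along a shortest
`(s,T)`-path of the compressed exchange graph, distances from `s` and to `T` do not
decrease (below the old `d(s,T)`). -/
theorem monotonicity_matroid_partition {V ι : Type*} [DecidableEq V] [Fintype V]
    [DecidableEq ι] [Fintype ι] (M : ι → FinMatroid V) (P : ι → Finset V) (S : Finset V)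
    (hind : ∀ i, (M i).Indep (P i)) (hdisj : ∀ i j, i ≠ j → Disjoint (P i) (P j))
    (hS : Finset.univ.biUnion P = S)
    (π : V → ι) (hπ : ∀ i, ∀ v ∈ P i, π v = i)
    (j : ι) (vs : List V) (hne : vs ≠ []) (hnd : vs.Nodup)
    (hchain : List.Chain' (compAdj M P)
      (CVert.src :: (vs.map CVert.elt ++ [CVert.snk j])))
    (hshort : (⨅ i : ι, ddist (compAdj M P) CVert.src (CVert.snk i))
      = ((vs.length + 1 : ℕ) : ℕ∞)) :
    ∀ v : V,
      (ddist (compAdj M P) CVert.src (CVert.elt v)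
          < (⨅ i : ι, ddist (compAdj M P) CVert.src (CVert.snk i)) →
        ddist (compAdj M P) CVert.src (CVert.elt v)
          ≤ ddist (compAdj M (updatePartition P π vs hne j)) CVert.src (CVert.elt v)) ∧
      ((⨅ i : ι, ddist (compAdj M P) (CVert.elt v) (CVert.snk i))
          < (⨅ i : ι, ddist (compAdj M P) CVert.src (CVert.snk i)) →
        (⨅ i : ι, ddist (compAdj M P) (CVert.elt v) (CVert.snk i))
          ≤ (⨅ i : ι, ddist (compAdj M (updatePartition P π vs hne j))
              (CVert.elt v) (CVert.snk i))) ∧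
      ((⨅ i : ι, ddist (compAdj M P) CVert.src (CVert.snk i))
          ≤ ddist (compAdj M P) CVert.src (CVert.elt v) →
        (⨅ i : ι, ddist (compAdj M P) CVert.src (CVert.snk i))
          ≤ ddist (compAdj M (updatePartition P π vs hne j)) CVert.src (CVert.elt v)) ∧
      ((⨅ i : ι, ddist (compAdj M P) CVert.src (CVert.snk i))
          ≤ (⨅ i : ι, ddist (compAdj M P) (CVert.elt v) (CVert.snk i)) →
        (⨅ i : ι, ddist (compAdj M P) CVert.src (CVert.snk i))
          ≤ (⨅ i : ι, ddist (compAdj M (updatePartition P π vs hne j))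
              (CVert.elt v) (CVert.snk i))) := by

  intro v
  refine ⟨?_, ?_, ?_, ?_⟩
  · intro hlt
    rw [hshort] at hlt
    refine le_ddist fun m hm => ?_
    have h := pot_s (M:=M) (P:=P) (π:=π) (j:=j) (vs:=vs) (hne:=hne) (hnd:=hnd)
      (hind:=hind) (hπ:=hπ) (hchain:=hchain) (hshort:=hshort) m v hm
    rwa [min_eq_left hlt.le] at h
  · intro hlt
    rw [hshort] at hlt
    refine le_iInf fun i' => le_ddist fun m hm => ?_
    have h := pot_t (M:=M) (P:=P) (π:=π) (j:=j) (vs:=vs) (hne:=hne) (hnd:=hnd)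
      (hind:=hind) (hπ:=hπ) (hchain:=hchain) (hshort:=hshort) m v i' hm
    rwa [min_eq_left hlt.le] at h
  · intro hge
    rw [hshort] at hge ⊢
    refine le_ddist fun m hm => ?_
    have h := pot_s (M:=M) (P:=P) (π:=π) (j:=j) (vs:=vs) (hne:=hne) (hnd:=hnd)
      (hind:=hind) (hπ:=hπ) (hchain:=hchain) (hshort:=hshort) m v hm
    rwa [min_eq_right hge] at h
  · intro hge
    rw [hshort] at hge ⊢
    refine le_iInf fun i' => le_ddist fun m hm => ?_
    have h := pot_t (M:=M) (P:=P) (π:=π) (j:=j) (vs:=vs) (hne:=hne) (hnd:=hnd)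
      (hind:=hind) (hπ:=hπ) (hchain:=hchain) (hshort:=hshort) m v i' hm
    rwa [min_eq_right hge] at h
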